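/- Let (C,∂) be a finitely generated free chain complex over R = F₂[U,V,U⁻¹,V⁻¹] with basis B, and let Φ_B and Ψ_B be the formal derivatives of ∂ with respect to U and V respectively. Then Φ_B ∘ Ψ_B + Ψ_B ∘ Φ_B = ∂ ∘ K + K ∘ ∂ for some R-linear map K; i.e., Φ_B and Ψ_B commute up to R-equivariant chain homotopy. Moreover K can be taken to be the formal derivative with respect to V of the matrix of Φ_B. -/

import Mathlib

open Finsupp

noncomputable section

abbrev F2 : Type := ZMod 2

/-- The Laurent polynomial ring `F₂[U,V,U⁻¹,V⁻¹]`, realized as the monoid algebra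
of `ℤ × ℤ` over `F₂`; `U` corresponds to `(1,0)` and `V` to `(0,1)`. -/
abbrev R2 : Type := AddMonoidAlgebra F2 (ℤ × ℤ)

/-- Formal derivative of a Laurent polynomial with respect to `U`. -/
def dU (f : R2) : R2 :=
  Finsupp.sum f.coeff fun mn c => AddMonoidAlgebra.ofCoeff (Finsupp.single (mn.1 - 1, mn.2) ((mn.1 : F2) * c))

/-- Formal derivative of a Laurent polynomial with respect to `V`. -/
def dV (f : R2) : R2 :=
  Finsupp.sum f.coeff fun mn c => AddMonoidAlgebra.ofCoeff (Finsupp.single (mn.1, mn.2 - 1) ((mn.2 : F2) * c))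

/-- The `R2`-linear map `(B →₀ R2) →ₗ (B' →₀ R2)` determined by its values on
the standard basis. -/
def bmap {B B' : Type} (v : B → (B' →₀ R2)) : (B →₀ R2) →ₗ[R2] (B' →₀ R2) :=
  Finsupp.lsum R2 fun x => LinearMap.toSpanSingleton R2 _ (v x)

/-- The matrix entry `P_{x y}` of a linear map with respect to the standard bases. -/
def matOf {B B' : Type} (f : (B →₀ R2) →ₗ[R2] (B' →₀ R2)) (x : B) (y : B') : R2 :=
  f (Finsupp.single x 1) y

/-- Apply `g : R2 → R2` to each matrix entry of `f`. -/
def entrywise {B B' : Type} [Finite B'] (g : R2 → R2)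
    (f : (B →₀ R2) →ₗ[R2] (B' →₀ R2)) : (B →₀ R2) →ₗ[R2] (B' →₀ R2) :=
  bmap fun x => Finsupp.equivFunOnFinite.symm fun y => g (matOf f x y)

/-- `Φ_B`, the formal derivative of the differential with respect to `U`. -/
def PhiB {B : Type} [Finite B] (d : (B →₀ R2) →ₗ[R2] (B →₀ R2)) :
    (B →₀ R2) →ₗ[R2] (B →₀ R2) :=
  entrywise dU d

/-- `Ψ_B`, the formal derivative of the differential with respect to `V`. -/
def PsiB {B : Type} [Finite B] (d : (B →₀ R2) →ₗ[R2] (B →₀ R2)) :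
    (B →₀ R2) →ₗ[R2] (B →₀ R2) :=
  entrywise dV d

/-! ### Auxiliary lemmas -/

lemma dU_zero : dU 0 = 0 := by simp [dU]

lemma dV_zero : dV 0 = 0 := by simp [dV]

lemma dU_single (mn : ℤ × ℤ) (c : F2) :
    dU (AddMonoidAlgebra.single mn c) = AddMonoidAlgebra.single (mn.1 - 1, mn.2) ((mn.1 : F2) * c) := by
  unfold dU; rw [AddMonoidAlgebra.coeff_single, Finsupp.sum_single_index]; · rfl
  simp

lemma dV_single (mn : ℤ × ℤ) (c : F2) :
    dV (AddMonoidAlgebra.single mn c) = AddMonoidAlgebra.single (mn.1, mn.2 - 1) ((mn.2 : F2) * c) := by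
  unfold dV; rw [AddMonoidAlgebra.coeff_single, Finsupp.sum_single_index]; · rfl
  simp

lemma dU_add (f g : R2) : dU (f + g) = dU f + dU g := by
  unfold dU
  rw [AddMonoidAlgebra.coeff_add, Finsupp.sum_add_index']
  · intro a; simp
  · intro a b c; rw [mul_add, Finsupp.single_add, AddMonoidAlgebra.ofCoeff_add]

lemma dV_add (f g : R2) : dV (f + g) = dV f + dV g := by
  unfold dV
  rw [AddMonoidAlgebra.coeff_add, Finsupp.sum_add_index']
  · intro a; simp
  · intro a b c; rw [mul_add, Finsupp.single_add, AddMonoidAlgebra.ofCoeff_add]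

lemma dU_mul (f g : R2) : dU (f * g) = dU f * g + f * dU g := by
  induction f using AddMonoidAlgebra.induction_linear with
  | zero => simp [dU_zero]
  | add f1 f2 h1 h2 => rw [add_mul, dU_add, h1, h2, dU_add, add_mul, add_mul]; abel
  | single a b =>
    induction g using AddMonoidAlgebra.induction_linear with
    | zero => simp [dU_zero]
    | add g1 g2 h1 h2 => rw [mul_add, dU_add, h1, h2, dU_add, mul_add, mul_add]; abel
    | single c e =>
      rw [AddMonoidAlgebra.single_mul_single, dU_single, dU_single, dU_single,
        AddMonoidAlgebra.single_mul_single, AddMonoidAlgebra.single_mul_single]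
      have h1 : ((a + c).1 - 1, (a + c).2) = (a.1 - 1, a.2) + c := by
        simp [Prod.ext_iff]; ring
      have h2 : a + (c.1 - 1, c.2) = (a.1 - 1, a.2) + c := by
        simp [Prod.ext_iff]; ring
      rw [h1, h2, ← AddMonoidAlgebra.single_add]
      congr 1
      simp only [Prod.fst_add]
      push_cast
      ring

lemma dV_mul (f g : R2) : dV (f * g) = dV f * g + f * dV g := by
  induction f using AddMonoidAlgebra.induction_linear with
  | zero => simp [dV_zero]
  | add f1 f2 h1 h2 => rw [add_mul, dV_add, h1, h2, dV_add, add_mul, add_mul]; abel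
  | single a b =>
    induction g using AddMonoidAlgebra.induction_linear with
    | zero => simp [dV_zero]
    | add g1 g2 h1 h2 => rw [mul_add, dV_add, h1, h2, dV_add, mul_add, mul_add]; abel
    | single c e =>
      rw [AddMonoidAlgebra.single_mul_single, dV_single, dV_single, dV_single,
        AddMonoidAlgebra.single_mul_single, AddMonoidAlgebra.single_mul_single]
      have h1 : ((a + c).1, (a + c).2 - 1) = (a.1, a.2 - 1) + c := by
        simp [Prod.ext_iff]; ring
      have h2 : a + (c.1, c.2 - 1) = (a.1, a.2 - 1) + c := by
        simp [Prod.ext_iff]; ring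
      rw [h1, h2, ← AddMonoidAlgebra.single_add]
      congr 1
      simp only [Prod.snd_add]
      push_cast
      ring

/-- `dU` as an additive monoid hom, to use `map_sum`. -/
def dUhom : R2 →+ R2 := AddMonoidHom.mk' dU dU_add

/-- `dV` as an additive monoid hom, to use `map_sum`. -/
def dVhom : R2 →+ R2 := AddMonoidHom.mk' dV dV_add

lemma dU_sum {ι : Type*} (s : Finset ι) (h : ι → R2) :
    dU (∑ i ∈ s, h i) = ∑ i ∈ s, dU (h i) := map_sum dUhom h s

lemma dV_sum {ι : Type*} (s : Finset ι) (h : ι → R2) :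
    dV (∑ i ∈ s, h i) = ∑ i ∈ s, dV (h i) := map_sum dVhom h s

lemma r2_add_self (x : R2) : x + x = 0 := by
  ext a
  rw [AddMonoidAlgebra.coeff_add, Finsupp.add_apply, AddMonoidAlgebra.coeff_zero]
  exact CharTwo.add_self_eq_zero _

lemma r2_eq_of_add_eq_zero {a b : R2} (h : a + b = 0) : a = b := by
  calc a = a + b + b := by rw [add_assoc, r2_add_self, add_zero]
  _ = b := by rw [h, zero_add]

lemma matOf_ext {B B' : Type} {f g : (B →₀ R2) →ₗ[R2] (B' →₀ R2)}
    (h : ∀ x y, matOf f x y = matOf g x y) : f = g := by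
  apply Finsupp.lhom_ext
  intro a b
  have hb : (Finsupp.single a b : B →₀ R2) = b • Finsupp.single a 1 := by
    rw [Finsupp.smul_single, smul_eq_mul, mul_one]
  rw [hb, map_smul, map_smul]
  exact congrArg _ (Finsupp.ext fun y => h a y)

lemma matOf_entrywise {B B' : Type} [Finite B'] (g : R2 → R2)
    (f : (B →₀ R2) →ₗ[R2] (B' →₀ R2)) (x : B) (y : B') :
    matOf (entrywise g f) x y = g (matOf f x y) := by
  simp [entrywise, bmap, matOf, Finsupp.sum_single_index]

lemma matOf_add {B B' : Type} (f g : (B →₀ R2) →ₗ[R2] (B' →₀ R2)) (x : B) (y : B') :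
    matOf (f + g) x y = matOf f x y + matOf g x y := rfl

lemma matOf_comp {B B' B'' : Type} [Fintype B']
    (f : (B →₀ R2) →ₗ[R2] (B' →₀ R2)) (g : (B' →₀ R2) →ₗ[R2] (B'' →₀ R2))
    (x : B) (z : B'') :
    matOf (g ∘ₗ f) x z = ∑ y : B', matOf f x y * matOf g y z := by
  classical
  unfold matOf
  rw [LinearMap.comp_apply]
  set p := f (Finsupp.single x 1) with hp
  conv_lhs => rw [← Finsupp.sum_single p]
  rw [map_finsuppSum, Finsupp.sum]
  rw [Finsupp.finset_sum_apply]
  rw [Finset.sum_subset (Finset.subset_univ p.support)]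
  · apply Finset.sum_congr rfl
    intro y _
    have : (Finsupp.single y (p y) : B' →₀ R2) = p y • Finsupp.single y 1 := by
      rw [Finsupp.smul_single, smul_eq_mul, mul_one]
    rw [this, map_smul, Finsupp.smul_apply, smul_eq_mul]
  · intro y _ hy
    rw [Finsupp.notMem_support_iff.mp hy]
    simp

/-- `Φ_B` and `Ψ_B` commute up to `R`-equivariant chain homotopy:
`Φ_B ∘ Ψ_B + Ψ_B ∘ Φ_B = ∂ ∘ K + K ∘ ∂` for some `R`-linear `K`, and moreover
`K` can be taken to be the formal `V`-derivative of the matrix of `Φ_B`. -/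
theorem stmt2 {B : Type} [Fintype B]
    (d : (B →₀ R2) →ₗ[R2] (B →₀ R2)) (hd : d ∘ₗ d = 0) :
    ∃ K : (B →₀ R2) →ₗ[R2] (B →₀ R2),
      K = entrywise dV (PhiB d) ∧
      PhiB d ∘ₗ PsiB d + PsiB d ∘ₗ PhiB d = d ∘ₗ K + K ∘ₗ d := by
  classical
  set Q : B → B → R2 := matOf d with hQdef
  have hmat : ∀ x z : B, ∑ y : B, Q x y * Q y z = 0 := by
    intro x z
    have h0 : matOf (d ∘ₗ d) x z = matOf (0 : (B →₀ R2) →ₗ[R2] (B →₀ R2)) x z := by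
      rw [hd]
    rw [matOf_comp] at h0
    simpa [matOf, hQdef] using h0
  have h1 : ∀ x z : B,
      ∑ y : B, (dU (Q x y) * Q y z + Q x y * dU (Q y z)) = 0 := by
    intro x z
    have := congrArg dU (hmat x z)
    rw [dU_sum, dU_zero] at this
    simpa only [dU_mul] using this
  have h2 : ∀ x z : B,
      ∑ y : B, ((dV (dU (Q x y)) * Q y z + dU (Q x y) * dV (Q y z)) +
        (dV (Q x y) * dU (Q y z) + Q x y * dV (dU (Q y z)))) = 0 := by
    intro x z
    have := congrArg dV (h1 x z)
    rw [dV_sum, dV_zero] at this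
    simpa only [dV_add, dV_mul, add_assoc] using this
  refine ⟨entrywise dV (PhiB d), rfl, ?_⟩
  apply matOf_ext
  intro x z
  rw [matOf_add, matOf_add, matOf_comp, matOf_comp, matOf_comp, matOf_comp]
  simp only [PhiB, PsiB, matOf_entrywise, ← hQdef]
  have key := h2 x z
  rw [Finset.sum_add_distrib, Finset.sum_add_distrib, Finset.sum_add_distrib] at key
  apply r2_eq_of_add_eq_zero
  rw [← key]
  abel

end
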